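/- For every real r > 2, θ ∈ [−1, 0], and positive integer n, there exist θ₃ ∈ [−1, 2] and θ₄ ∈ (−2, 1) such that ∑_{k=n}^∞ 1/k^r + (θ/n) ∑_{k=1}^∞ k/(k+n)^r = (1/n^r)·( (n/r)(1 + θ₄/(r−2)) + θ₃ ). -/

import Mathlib

open Filter Topology

lemma slope_bounds {s x : ℝ} (hs : 1 < s) (hx : 0 < x) :
    (x+1) ^ (-s) ≤ (x ^ (1-s) - (x+1) ^ (1-s)) / (s-1) ∧
      (x ^ (1-s) - (x+1) ^ (1-s)) / (s-1) ≤ x ^ (-s) := by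
  have hx1 : x < x + 1 := by linarith
  have hcont : ContinuousOn (fun t : ℝ => t ^ (1-s)) (Set.Icc x (x+1)) := by
    apply ContinuousOn.rpow_const continuousOn_id
    exact fun t ht => Or.inl (ne_of_gt (lt_of_lt_of_le hx ht.1))
  have hderiv : ∀ t ∈ Set.Ioo x (x+1),
      HasDerivAt (fun t : ℝ => t ^ (1-s)) ((1-s) * t ^ (-s)) t := by
    intro t ht
    have : HasDerivAt (fun t : ℝ => t ^ (1-s)) ((1-s) * t ^ ((1-s)-1)) t :=
      Real.hasDerivAt_rpow_const (Or.inl (ne_of_gt (lt_trans hx ht.1)))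
    simpa [show (1-s)-1 = -s by ring] using this
  obtain ⟨c, hc, hceq⟩ := exists_hasDerivAt_eq_slope (fun t : ℝ => t ^ (1-s))
    (fun t => (1-s) * t ^ (-s)) hx1 hcont hderiv
  have hc0 : 0 < c := lt_trans hx hc.1
  have hs1 : (0:ℝ) < s - 1 := by linarith
  have key : (x ^ (1-s) - (x+1) ^ (1-s)) / (s-1) = c ^ (-s) := by
    have : (1-s) * c ^ (-s) = ((x+1) ^ (1-s) - x ^ (1-s)) / 1 := by
      simpa using hceq
    field_simp at this ⊢
    nlinarith [this]
  rw [key]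
  constructor
  · exact Real.rpow_le_rpow_of_nonpos hc0 hc.2.le (by linarith)
  · exact Real.rpow_le_rpow_of_nonpos hx hc.1.le (by linarith)

lemma summable_tail {s a : ℝ} (hs : 1 < s) (ha : 0 < a) :
    Summable (fun k : ℕ => (a + (k:ℝ)) ^ (-s)) := by
  have h := (Real.summable_one_div_nat_add_rpow a s).mpr hs
  refine h.congr fun k => ?_
  have hpos : 0 < (k:ℝ) + a := by positivity
  rw [abs_of_pos hpos, Real.rpow_neg (by positivity), one_div, add_comm a (k:ℝ)]

lemma tail_upper {s a : ℝ} (hs : 1 < s) (ha : 0 < a) :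
    (∑' k : ℕ, ((a+1) + (k:ℝ)) ^ (-s)) ≤ a ^ (1-s) / (s-1) := by
  apply Real.tsum_le_of_sum_range_le (fun k => by positivity)
  intro N
  set g : ℕ → ℝ := fun k => (a+(k:ℝ)) ^ (1-s) with hg
  have h1 : ∀ k ∈ Finset.range N, ((a+1) + (k:ℝ)) ^ (-s) ≤ (g k - g (k+1)) / (s-1) := by
    intro k _
    have := (slope_bounds hs (show (0:ℝ) < a + k by positivity)).1
    have e1 : (a+1) + (k:ℝ) = (a+(k:ℝ)) + 1 := by ring
    have e2 : g (k+1) = ((a+(k:ℝ))+1) ^ (1-s) := by simp [hg]; ring_nf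
    rw [e1, e2]
    exact this
  calc ∑ k ∈ Finset.range N, ((a+1) + (k:ℝ)) ^ (-s)
      ≤ ∑ k ∈ Finset.range N, (g k - g (k+1)) / (s-1) := Finset.sum_le_sum h1
    _ = (∑ k ∈ Finset.range N, (g k - g (k+1))) / (s-1) := by rw [Finset.sum_div]
    _ = (g 0 - g N) / (s-1) := by rw [Finset.sum_range_sub' g]
    _ ≤ a ^ (1-s) / (s-1) := by
        apply div_le_div_of_nonneg_right ?_ (by linarith)
        have : 0 ≤ g N := by positivity
        simp only [hg, Nat.cast_zero, add_zero]
        linarith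

lemma tail_lower {s a : ℝ} (hs : 1 < s) (ha : 0 < a) :
    a ^ (1-s) / (s-1) ≤ ∑' k : ℕ, (a + (k:ℝ)) ^ (-s) := by
  have hsum := summable_tail hs ha
  have hpart : ∀ N : ℕ, (a ^ (1-s) - (a+(N:ℝ)) ^ (1-s)) / (s-1) ≤
      ∑' k : ℕ, (a + (k:ℝ)) ^ (-s) := by
    intro N
    set g : ℕ → ℝ := fun k => (a+(k:ℝ)) ^ (1-s) with hg
    have h1 : ∀ k ∈ Finset.range N, (g k - g (k+1)) / (s-1) ≤ (a + (k:ℝ)) ^ (-s) := by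
      intro k _
      have := (slope_bounds hs (show (0:ℝ) < a + k by positivity)).2
      have e2 : g (k+1) = ((a+(k:ℝ))+1) ^ (1-s) := by simp [hg]; ring_nf
      rw [e2]
      exact this
    calc (a ^ (1-s) - (a+(N:ℝ)) ^ (1-s)) / (s-1)
        = (g 0 - g N) / (s-1) := by simp [hg]
      _ = (∑ k ∈ Finset.range N, (g k - g (k+1))) / (s-1) := by rw [Finset.sum_range_sub' g]
      _ = ∑ k ∈ Finset.range N, (g k - g (k+1)) / (s-1) := by rw [Finset.sum_div]
      _ ≤ ∑ k ∈ Finset.range N, (a + (k:ℝ)) ^ (-s) := Finset.sum_le_sum h1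
      _ ≤ ∑' k : ℕ, (a + (k:ℝ)) ^ (-s) := Summable.sum_le_tsum _ (fun k _ => by positivity) hsum
  have htend : Filter.Tendsto (fun N : ℕ => (a ^ (1-s) - (a+(N:ℝ)) ^ (1-s)) / (s-1))
      atTop (𝓝 (a ^ (1-s) / (s-1))) := by
    have h0 : Filter.Tendsto (fun N : ℕ => (a+(N:ℝ)) ^ (1-s)) atTop (𝓝 0) := by
      have h1 : Filter.Tendsto (fun N : ℕ => a+(N:ℝ)) atTop atTop :=
        tendsto_atTop_add_const_left _ a tendsto_natCast_atTop_atTop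
      have h2 := (tendsto_rpow_neg_atTop (show (0:ℝ) < s - 1 by linarith)).comp h1
      simpa [Function.comp_def, show -(s-1) = 1 - s by ring] using h2
    have := ((tendsto_const_nhds (x := a ^ (1-s))).sub h0).div_const (s-1)
    simpa using this
  exact le_of_tendsto' htend hpart

set_option maxHeartbeats 1000000 in
theorem combined_estimate (r θ : ℝ) (hr : 2 < r) (hθ : θ ∈ Set.Icc (-1 : ℝ) 0)
    (n : ℕ) (hn : 0 < n) :
    ∃ θ₃ ∈ Set.Icc (-1 : ℝ) 2, ∃ θ₄ ∈ Set.Ioo (-2 : ℝ) 1,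
      (∑' k : ℕ, 1 / ((n : ℝ) + k) ^ r) +
          (θ / n) * ∑' k : ℕ, ((k : ℝ) + 1) / (((k : ℝ) + 1 + n) ^ r) =
        (1 / (n : ℝ) ^ r) * (((n : ℝ) / r) * (1 + θ₄ / (r - 2)) + θ₃) := by
  obtain ⟨hθ1, hθ2⟩ := hθ
  set a : ℝ := (n : ℝ) with ha_def
  have ha1 : 1 ≤ a := by
    rw [ha_def]
    exact_mod_cast hn
  have ha0 : (0:ℝ) < a := by linarith
  have hr1 : (1:ℝ) < r := by linarith
  have hr1' : (1:ℝ) < r - 1 := by linarith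
  have hr0 : (0:ℝ) < r := by linarith
  have hrm1 : (0:ℝ) < r - 1 := by linarith
  have hrm2 : (0:ℝ) < r - 2 := by linarith
  -- S1
  set S1 : ℝ := ∑' k : ℕ, (a + (k:ℝ)) ^ (-r) with hS1_def
  have hsum1 : Summable (fun k : ℕ => (a + (k:ℝ)) ^ (-r)) := summable_tail hr1 ha0
  have hfirst : (∑' k : ℕ, 1 / ((n : ℝ) + k) ^ r) = S1 := by
    refine tsum_congr fun k => ?_
    have h : (0:ℝ) < a + k := by positivity
    rw [Real.rpow_neg h.le, one_div]
  set T0 : ℝ := ∑' k : ℕ, ((a+1) + (k:ℝ)) ^ (-r) with hT0_def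
  set T1 : ℝ := ∑' k : ℕ, ((a+1) + (k:ℝ)) ^ (-(r-1)) with hT1_def
  have hsumT0 : Summable (fun k : ℕ => ((a+1) + (k:ℝ)) ^ (-r)) :=
    summable_tail hr1 (by linarith)
  have hsumT1 : Summable (fun k : ℕ => ((a+1) + (k:ℝ)) ^ (-(r-1))) :=
    summable_tail hr1' (by linarith)
  have hshift : S1 = a ^ (-r) + T0 := by
    have hc : ∀ k : ℕ, (a + ((k+1 : ℕ):ℝ)) ^ (-r) = ((a+1) + (k:ℝ)) ^ (-r) := by
      intro k; push_cast; ring_nf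
    rw [hS1_def, Summable.tsum_eq_zero_add hsum1, tsum_congr hc]
    norm_num
    exact hT0_def.symm
  have hS1low : a ^ (1-r) / (r-1) ≤ S1 := tail_lower hr1 ha0
  have hT0up : T0 ≤ a ^ (1-r) / (r-1) := tail_upper hr1 ha0
  have hT1up : T1 ≤ a ^ (1-(r-1)) / ((r-1)-1) := tail_upper hr1' ha0
  -- S2
  set S2 : ℝ := ∑' k : ℕ, ((k : ℝ) + 1) / (((k : ℝ) + 1 + n) ^ r) with hS2_def
  have hterm : ∀ k : ℕ, ((k : ℝ) + 1) / (((k : ℝ) + 1 + n) ^ r)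
      = ((a+1) + (k:ℝ)) ^ (-(r-1)) - a * ((a+1) + (k:ℝ)) ^ (-r) := by
    intro k
    have he : (a+1) + (k:ℝ) = (k:ℝ) + 1 + a := by ring
    have hm : (0:ℝ) < (k:ℝ) + 1 + a := by positivity
    have hmr : (0:ℝ) < ((k:ℝ) + 1 + a) ^ r := Real.rpow_pos_of_pos hm r
    rw [he, show -(r-1) = 1 + -r by ring, Real.rpow_add hm, Real.rpow_one,
      Real.rpow_neg hm.le, ← ha_def]
    field_simp
    ring
  have hS2eq : S2 = T1 - a * T0 := by
    rw [hS2_def, tsum_congr hterm, Summable.tsum_sub hsumT1 (hsumT0.mul_left a),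
      tsum_mul_left]
  have hS2nonneg : 0 ≤ S2 := by
    rw [hS2_def]
    refine tsum_nonneg fun k => ?_
    have h2 : (0:ℝ) ≤ ((k:ℝ) + 1 + n) ^ r := Real.rpow_nonneg (by positivity) r
    positivity
  -- rpow algebra
  have hA1 : a ^ r * a ^ (-r) = 1 := by rw [← Real.rpow_add ha0]; norm_num
  have hA2 : a ^ r * a ^ (1-r) = a := by
    rw [← Real.rpow_add ha0, show r + (1-r) = 1 by ring, Real.rpow_one]
  have hA3 : a ^ (r-1) * a ^ (1-(r-1)) = a := by
    rw [← Real.rpow_add ha0, show (r-1) + (1-(r-1)) = 1 by ring, Real.rpow_one]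
  have hA5 : a ^ (r-1) * a = a ^ r := by
    nth_rewrite 2 [← Real.rpow_one a]
    rw [← Real.rpow_add ha0, show (r-1) + 1 = r by ring]
  have hrpow_pos : (0:ℝ) < a ^ r := Real.rpow_pos_of_pos ha0 r
  have hrpow1_pos : (0:ℝ) < a ^ (r-1) := Real.rpow_pos_of_pos ha0 (r-1)
  -- B1, B2 and cleared bounds
  set B1 : ℝ := a ^ r * S1 with hB1_def
  set B2 : ℝ := a ^ (r-1) * S2 with hB2_def
  have F1 : a ≤ B1 * (r-1) := by
    have h := mul_le_mul_of_nonneg_left hS1low hrpow_pos.le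
    rw [mul_div_assoc', hA2, ← hB1_def, div_le_iff₀ hrm1] at h
    linarith
  have F2 : B1 * (r-1) ≤ (r-1) + a := by
    have hS1up : S1 ≤ a ^ (-r) + a ^ (1-r) / (r-1) := by rw [hshift]; linarith
    have h := mul_le_mul_of_nonneg_left hS1up hrpow_pos.le
    rw [mul_add, mul_div_assoc', hA1, hA2, ← hB1_def] at h
    nlinarith [mul_le_mul_of_nonneg_right h hrm1.le,
      mul_div_cancel₀ a hrm1.ne']
  have hB2eq : B2 = a ^ (r-1) * T1 - B1 + 1 := by
    have hT0' : T0 = S1 - a ^ (-r) := by linarith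
    rw [hB2_def, hS2eq, hT0', hB1_def]
    linear_combination (a ^ (-r) - S1) * hA5 + hA1
  have hQ2 : (a ^ (r-1) * T1) * (r-2) ≤ a := by
    have h := mul_le_mul_of_nonneg_left hT1up hrpow1_pos.le
    rw [mul_div_assoc', hA3] at h
    have h' : a ^ (r-1) * T1 ≤ a / (r-2) := by
      rw [show r - 2 = r - 1 - 1 by ring]; exact h
    rw [le_div_iff₀ hrm2] at h'
    exact h'
  have F3 : B2 * (r-2) ≤ a - (B1 - 1) * (r-2) := by
    have e : B2 * (r-2) = (a ^ (r-1) * T1) * (r-2) - (B1 - 1) * (r-2) := by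
      rw [hB2eq]; ring
    linarith
  have F4 : 0 ≤ B2 := mul_nonneg hrpow1_pos.le hS2nonneg
  clear hS1low hT0up hT1up hshift hS2eq hS2nonneg hsum1 hsumT0 hsumT1 hterm hA1 hA2 hA3 hB2eq hQ2
  clear_value S1 S2 T0 T1 B1 B2
  clear hT0_def hT1_def
  clear T0 T1
  have hB1pos : 0 < B1 := by nlinarith [F1, ha1, hrm1]
  -- L
  set L : ℝ := B1 + θ * B2 with hL_def
  have hLlowB : B1 - B2 ≤ L := by linarith [mul_nonneg (by linarith : (0:ℝ) ≤ θ + 1) F4]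
  have hLupB : L ≤ B1 := by linarith [mul_nonneg (by linarith : (0:ℝ) ≤ -θ) F4]
  -- choose θ₃
  obtain ⟨θ₃, hθ₃1, hθ₃2, hX1, hX2⟩ :
      ∃ θ₃, -1 ≤ θ₃ ∧ θ₃ ≤ 2 ∧ a*(r-4) < (L-θ₃)*r*(r-2) ∧ (L-θ₃)*r*(r-2) < a*(r-1) := by
    have hediv : a / r * r = a := div_mul_cancel₀ a hr0.ne'
    rcases lt_or_ge (L - a/r) (-1) with hc | hc
    · -- θ₃ = -1, X = L + 1 < a/r
      refine ⟨-1, le_refl _, by norm_num, ?_, ?_⟩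
      · -- lower bound
        have s1 : 2*(B1*(r-2)) - a ≤ (L+1)*(r-2) := by
          linarith [mul_le_mul_of_nonneg_right hLlowB hrm2.le, F3]
        have s2 : a < B1 * r := by linarith [F1, hB1pos]
        have he1 : L - (-1) = L + 1 := by ring
        rw [he1]
        linarith [mul_le_mul_of_nonneg_right s1 hr0.le,
          mul_lt_mul_of_pos_right s2 (by linarith : (0:ℝ) < 2*(r-2))]
      · have h' : (L+1)*r < a := by
          have : L + 1 < a / r := by linarith
          rw [lt_div_iff₀ hr0] at this
          linarith
        have he1 : L - (-1) = L + 1 := by ring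
        rw [he1]
        linarith [mul_lt_mul_of_pos_right h' hrm2, ha0]
    rcases le_or_gt (L - a/r) 2 with hc2 | hc2
    · -- θ₃ = L - a/r, X = a/r
      refine ⟨L - a/r, by linarith, hc2, ?_, ?_⟩
      · have e : (L - (L - a/r))*r*(r-2) = (a/r*r)*(r-2) := by ring
        rw [e, hediv]
        linarith [ha0]
      · have e : (L - (L - a/r))*r*(r-2) = (a/r*r)*(r-2) := by ring
        rw [e, hediv]
        linarith [ha0]
    · -- θ₃ = 2, X = L - 2
      refine ⟨2, by norm_num, le_refl _, ?_, ?_⟩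
      · have h' : a < (L-2)*r := by
          have : a / r < L - 2 := by linarith
          rw [div_lt_iff₀ hr0] at this
          linarith
        linarith [mul_lt_mul_of_pos_right h' hrm2, ha0]
      · have hL2 : 2 < L := by
          have : 0 < a / r := by positivity
          linarith
        have t1 : (L-2)*(r-1) ≤ a - (r-1) := by
          linarith [mul_le_mul_of_nonneg_right hLupB hrm1.le, F2]
        linarith [mul_le_mul_of_nonneg_right t1 hrm1.le, hL2, sq_nonneg (r-1)]
  -- construct θ₄
  set y : ℝ := (L - θ₃) * r / a with hy_def
  have hya : y * a = (L - θ₃) * r := div_mul_cancel₀ _ ha0.ne'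
  have hy1 : (r-4) < y * (r-2) := by
    have e : (y * (r-2)) * a = (L-θ₃)*r*(r-2) := by
      rw [show (y * (r-2)) * a = (y*a)*(r-2) by ring, hya]
    have : (r-4) * a < (y * (r-2)) * a := by rw [e]; linarith
    exact lt_of_mul_lt_mul_right this ha0.le
  have hy2 : y * (r-2) < (r-1) := by
    have e : (y * (r-2)) * a = (L-θ₃)*r*(r-2) := by
      rw [show (y * (r-2)) * a = (y*a)*(r-2) by ring, hya]
    have : (y * (r-2)) * a < (r-1) * a := by rw [e]; linarith
    exact lt_of_mul_lt_mul_right this ha0.le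
  refine ⟨θ₃, ⟨hθ₃1, hθ₃2⟩, (y - 1) * (r-2), ⟨by linarith [hy1], by linarith [hy2]⟩, ?_⟩
  -- final equation
  have hA : (a/r) * (1 + ((y - 1) * (r-2)) / (r-2)) = L - θ₃ := by
    rw [hy_def]
    field_simp
    ring
  have hfin : S1 + (θ/a)*S2 = (1/a^r) * (B1 + θ*B2) := by
    rw [hB1_def, hB2_def, ← hA5]
    field_simp
  rw [hfirst, hA, show L - θ₃ + θ₃ = L by ring, hL_def]
  exact hfin
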